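/- For real numbers s and r, define L_SE(s) := e^s - e^r·s + e^r·(r - 1) and the soft-label BCE loss L_sBCE(s) := -σ(r)·log σ(s) - (1 - σ(r))·log(1 - σ(s)), where σ is the logistic sigmoid. Then the derivatives satisfy L_SE'(s) = (1 + e^s)·(1 + e^r)·L_sBCE'(s). -/

import Mathlib

noncomputable def sigmoid (x : ℝ) : ℝ := 1 / (1 + Real.exp (-x))

lemma one_add_exp_pos (x : ℝ) : 0 < 1 + Real.exp (-x) := by
  positivity

lemma bce_eq (r : ℝ) :
    (fun s => -(sigmoid r * Real.log (sigmoid s))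
        - (1 - sigmoid r) * Real.log (1 - sigmoid s)) =
    (fun s => Real.log (1 + Real.exp (-s)) + (1 - sigmoid r) * s) := by
  funext x
  have hpos : 0 < 1 + Real.exp (-x) := one_add_exp_pos x
  have h1 : Real.log (sigmoid x) = -Real.log (1 + Real.exp (-x)) := by
    unfold sigmoid
    rw [one_div, Real.log_inv]
  have h2 : (1 : ℝ) - sigmoid x = Real.exp (-x) / (1 + Real.exp (-x)) := by
    unfold sigmoid
    field_simp
    ring
  have h3 : Real.log (1 - sigmoid x) = -x - Real.log (1 + Real.exp (-x)) := by
    rw [h2, Real.log_div (Real.exp_ne_zero _) (ne_of_gt hpos), Real.log_exp]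
  rw [h1, h3]
  ring

/-- The score entropy loss and the soft-label BCE loss have proportional derivatives. -/
theorem scoreEntropy_deriv_eq_scaled_sBCE_deriv (r : ℝ) (s : ℝ) :
    deriv (fun s => Real.exp s - Real.exp r * s + Real.exp r * (r - 1)) s =
      (1 + Real.exp s) * (1 + Real.exp r) *
        deriv (fun s => -(sigmoid r * Real.log (sigmoid s))
          - (1 - sigmoid r) * Real.log (1 - sigmoid s)) s := by
  have hpos : 0 < 1 + Real.exp (-s) := one_add_exp_pos s
  -- derivative of LHS
  have hL : HasDerivAt (fun s => Real.exp s - Real.exp r * s + Real.exp r * (r - 1))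
      (Real.exp s - Real.exp r) s := by
    have := ((Real.hasDerivAt_exp s).sub ((hasDerivAt_id s).const_mul (Real.exp r))).add_const
      (Real.exp r * (r - 1))
    simpa using this
  -- derivative of RHS
  have hinner : HasDerivAt (fun x : ℝ => 1 + Real.exp (-x)) (-Real.exp (-s)) s := by
    have := (Real.hasDerivAt_exp (-s)).comp s ((hasDerivAt_id s).neg)
    simpa using this.const_add 1
  have hlog : HasDerivAt (fun x : ℝ => Real.log (1 + Real.exp (-x)))
      (-Real.exp (-s) / (1 + Real.exp (-s))) s := hinner.log (ne_of_gt hpos)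
  have hR : HasDerivAt (fun x : ℝ => Real.log (1 + Real.exp (-x)) + (1 - sigmoid r) * x)
      (-Real.exp (-s) / (1 + Real.exp (-s)) + (1 - sigmoid r)) s := by
    have := hlog.add ((hasDerivAt_id s).const_mul (1 - sigmoid r))
    simp at this; exact this
  rw [bce_eq, hL.deriv, hR.deriv]
  unfold sigmoid
  have h1 : Real.exp (-s) = 1 / Real.exp s := by rw [Real.exp_neg]; ring
  have h2 : Real.exp (-r) = 1 / Real.exp r := by rw [Real.exp_neg]; ring
  rw [h1, h2]
  have hs := Real.exp_pos s
  have hr := Real.exp_pos r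
  field_simp
  ring
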